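/- For every n ∈ ℕ and α ∈ ℕ, the recurrence relation x·Q_n^{(α)}(x) = Q_{n+1}^{(α)}(x) + Σ_{j=max(n−θ,0)}^{n} ℓ_{n,j}^{(α)}·Q_j^{(α)}(x) holds, where the coefficients ℓ_{n,j}^{(α)} are determined by (ℓ_{n,j}^{(α)})^⊤ := (H_j^{(α)})^{−1}·⟨P_j^{(α)}, x·Q_n^{(α)}⟩_θ^α. -/

import Mathlib

open MeasureTheory Polynomial Matrix Filter

/-- Evaluation of a matrix polynomial at a real scalar. -/
noncomputable def mpEval {p : ℕ} (f : Polynomial (Matrix (Fin p) (Fin p) ℝ)) (x : ℝ) :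
    Matrix (Fin p) (Fin p) ℝ :=
  f.sum fun k a => x ^ k • a

/-- The adjacent matrix-valued θ-deformed bilinear form
`⟨f, g⟩_θ^α = ∫ f(x) · x^α · W(x) · g(x^θ)ᵀ dx`, computed entrywise. -/
noncomputable def bform {p : ℕ} (θ : ℕ) (W : ℝ → Matrix (Fin p) (Fin p) ℝ) (α : ℕ)
    (f g : Polynomial (Matrix (Fin p) (Fin p) ℝ)) : Matrix (Fin p) (Fin p) ℝ :=
  Matrix.of fun i j => ∫ x : ℝ, (mpEval f x * (x ^ α • W x) * (mpEval g (x ^ θ))ᵀ) i j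

/-- A matrix polynomial is monic of degree `n`: the `x^n` coefficient is `I_p`
and all higher coefficients vanish. -/
def MonicDeg {p : ℕ} (f : Polynomial (Matrix (Fin p) (Fin p) ℝ)) (n : ℕ) : Prop :=
  f.coeff n = 1 ∧ ∀ k : ℕ, n < k → f.coeff k = 0

/-- The k-th moment `m_k = ∫ x^k W(x) dx`, computed entrywise. -/
noncomputable def mom {p : ℕ} (W : ℝ → Matrix (Fin p) (Fin p) ℝ) (k : ℕ) :
    Matrix (Fin p) (Fin p) ℝ :=
  Matrix.of fun i j => ∫ x : ℝ, x ^ k * W x i j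

/-- The block moment matrix `M_n^{(α)} = (m_{α+i+jθ})_{i,j=0}^{n-1}`, as an
`n × n` matrix over the ring of `p × p` real matrices. -/
noncomputable def momMat {p : ℕ} (θ : ℕ) (W : ℝ → Matrix (Fin p) (Fin p) ℝ) (n α : ℕ) :
    Matrix (Fin n) (Fin n) (Matrix (Fin p) (Fin p) ℝ) :=
  Matrix.of fun i j => mom W (α + (i : ℕ) + (j : ℕ) * θ)


section Aux
variable {p : ℕ}

lemma mpEval_apply (f : Polynomial (Matrix (Fin p) (Fin p) ℝ)) (x : ℝ) (i a : Fin p) :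
    mpEval f x i a = ∑ k ∈ f.support, x ^ k * f.coeff k i a := by
  simp [mpEval, Polynomial.sum_def, Matrix.sum_apply, Matrix.smul_apply]

/-- Flattened algebraic form of the bilinear form. -/
noncomputable def bform2 (θ : ℕ) (W : ℝ → Matrix (Fin p) (Fin p) ℝ) (α : ℕ)
    (f g : Polynomial (Matrix (Fin p) (Fin p) ℝ)) : Matrix (Fin p) (Fin p) ℝ :=
  ∑ k ∈ f.support, ∑ l ∈ g.support, f.coeff k * mom W (α + k + l * θ) * (g.coeff l)ᵀ

lemma integrand_eq (θ : ℕ) (W : ℝ → Matrix (Fin p) (Fin p) ℝ) (α : ℕ)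
    (f g : Polynomial (Matrix (Fin p) (Fin p) ℝ)) (x : ℝ) (i j : Fin p) :
    (mpEval f x * (x ^ α • W x) * (mpEval g (x ^ θ))ᵀ) i j
      = ∑ k ∈ f.support, ∑ l ∈ g.support, ∑ a : Fin p, ∑ b : Fin p,
          (f.coeff k i a * g.coeff l j b) * (x ^ (α + k + l * θ) * W x a b) := by
  simp only [Matrix.mul_apply, Matrix.transpose_apply, Matrix.smul_apply, mpEval_apply,
    Finset.sum_mul, Finset.mul_sum, smul_eq_mul]
  conv_lhs => rw [Finset.sum_comm]
  conv_lhs => enter [2, l]; rw [Finset.sum_comm]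
  conv_lhs => enter [2, l, 2, a]; rw [Finset.sum_comm]
  conv_lhs => enter [2, l]; rw [Finset.sum_comm]
  conv_lhs => rw [Finset.sum_comm]
  refine Finset.sum_congr rfl fun k _ => Finset.sum_congr rfl fun l _ =>
    Finset.sum_congr rfl fun a _ => Finset.sum_congr rfl fun b _ => ?_
  rw [pow_add, pow_add, ← pow_mul]
  ring

variable {θ : ℕ} {W : ℝ → Matrix (Fin p) (Fin p) ℝ} {α : ℕ}
  (hWint : ∀ (k : ℕ) (i j : Fin p), Integrable fun x : ℝ => x ^ k * W x i j)

include hWint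

lemma bform_eq_bform2 (f g : Polynomial (Matrix (Fin p) (Fin p) ℝ)) :
    bform θ W α f g = bform2 θ W α f g := by
  ext i j
  show (∫ x : ℝ, (mpEval f x * (x ^ α • W x) * (mpEval g (x ^ θ))ᵀ) i j) = _
  have hint : ∀ (m : ℕ) (a b : Fin p) (c : ℝ),
      Integrable (fun x : ℝ => c * (x ^ m * W x a b)) := fun m a b c =>
    (hWint m a b).const_mul c
  calc (∫ x : ℝ, (mpEval f x * (x ^ α • W x) * (mpEval g (x ^ θ))ᵀ) i j)
      = ∫ x : ℝ, ∑ k ∈ f.support, ∑ l ∈ g.support, ∑ a : Fin p, ∑ b : Fin p,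
          (f.coeff k i a * g.coeff l j b) * (x ^ (α + k + l * θ) * W x a b) := by
        congr 1; funext x; exact integrand_eq θ W α f g x i j
    _ = ∑ k ∈ f.support, ∑ l ∈ g.support, ∑ a : Fin p, ∑ b : Fin p,
          (f.coeff k i a * g.coeff l j b) * ∫ x : ℝ, x ^ (α + k + l * θ) * W x a b := by
        rw [integral_finset_sum _ fun k _ => integrable_finset_sum _ fun l _ =>
          integrable_finset_sum _ fun a _ => integrable_finset_sum _ fun b _ => hint _ _ _ _]
        refine Finset.sum_congr rfl fun k _ => ?_
        rw [integral_finset_sum _ fun l _ => integrable_finset_sum _ fun a _ =>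
          integrable_finset_sum _ fun b _ => hint _ _ _ _]
        refine Finset.sum_congr rfl fun l _ => ?_
        rw [integral_finset_sum _ fun a _ => integrable_finset_sum _ fun b _ => hint _ _ _ _]
        refine Finset.sum_congr rfl fun a _ => ?_
        rw [integral_finset_sum _ fun b _ => hint _ _ _ _]
        refine Finset.sum_congr rfl fun b _ => ?_
        exact integral_const_mul _ _
    _ = (bform2 θ W α f g) i j := by
        unfold bform2
        simp only [Matrix.sum_apply, Matrix.mul_apply, Matrix.transpose_apply]
        refine Finset.sum_congr rfl fun k _ => Finset.sum_congr rfl fun l _ => ?_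
        rw [Finset.sum_comm]
        refine Finset.sum_congr rfl fun a _ => ?_
        rw [Finset.sum_mul]
        refine Finset.sum_congr rfl fun b _ => ?_
        have hm : mom W (α + k + l * θ) b a = ∫ x : ℝ, x ^ (α + k + l * θ) * W x b a := rfl
        rw [hm]; ring


lemma bform_range (N M : ℕ) (f g : Polynomial (Matrix (Fin p) (Fin p) ℝ))
    (hf : ∀ k, N ≤ k → f.coeff k = 0) (hg : ∀ l, M ≤ l → g.coeff l = 0) :
    bform θ W α f g = ∑ k ∈ Finset.range N, ∑ l ∈ Finset.range M,
      f.coeff k * mom W (α + k + l * θ) * (g.coeff l)ᵀ := by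
  rw [bform_eq_bform2 hWint]
  unfold bform2
  rw [Finset.sum_subset (fun k hk => Finset.mem_range.2 (lt_of_not_ge fun h =>
    Polynomial.mem_support_iff.1 hk (hf k h)))]
  · refine Finset.sum_congr rfl fun k _ => ?_
    refine Finset.sum_subset (fun l hl => Finset.mem_range.2 (lt_of_not_ge fun h =>
      Polynomial.mem_support_iff.1 hl (hg l h))) fun l _ hl => ?_
    rw [Polynomial.notMem_support_iff.1 hl, Matrix.transpose_zero, mul_zero]
  · intro k _ hk
    rw [Polynomial.notMem_support_iff.1 hk]
    exact Finset.sum_eq_zero fun l _ => by rw [zero_mul, zero_mul]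

lemma bform_decomp_left (N : ℕ) (f g : Polynomial (Matrix (Fin p) (Fin p) ℝ))
    (hf : ∀ k, N ≤ k → f.coeff k = 0) :
    bform θ W α f g = ∑ k ∈ Finset.range N, f.coeff k * bform θ W α (X ^ k) g := by
  have hg : ∀ l, g.natDegree + 1 ≤ l → g.coeff l = 0 := fun l hl =>
    Polynomial.coeff_eq_zero_of_natDegree_lt hl
  rw [bform_range hWint N (g.natDegree + 1) f g hf hg]
  refine Finset.sum_congr rfl fun k _ => ?_
  have hx : ∀ k' : ℕ, k + 1 ≤ k' → (X ^ k : Polynomial (Matrix (Fin p) (Fin p) ℝ)).coeff k' = 0 :=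
    fun k' hk' => by rw [Polynomial.coeff_X_pow, if_neg (by omega)]
  rw [bform_range hWint (k + 1) (g.natDegree + 1) (X ^ k) g hx hg,
    Finset.sum_eq_single_of_mem k (Finset.self_mem_range_succ k)
      (fun b _ hb => Finset.sum_eq_zero fun l _ => by
        rw [Polynomial.coeff_X_pow, if_neg hb, zero_mul, zero_mul]),
    Finset.mul_sum]
  refine Finset.sum_congr rfl fun l _ => ?_
  rw [Polynomial.coeff_X_pow, if_pos rfl, one_mul, mul_assoc]

lemma bform_decomp_right (M : ℕ) (f g : Polynomial (Matrix (Fin p) (Fin p) ℝ))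
    (hg : ∀ l, M ≤ l → g.coeff l = 0) :
    bform θ W α f g = ∑ l ∈ Finset.range M, bform θ W α f (X ^ l) * (g.coeff l)ᵀ := by
  have hf : ∀ k, f.natDegree + 1 ≤ k → f.coeff k = 0 := fun k hk =>
    Polynomial.coeff_eq_zero_of_natDegree_lt hk
  rw [bform_range hWint (f.natDegree + 1) M f g hf hg, Finset.sum_comm]
  refine Finset.sum_congr rfl fun l _ => ?_
  have hx : ∀ l' : ℕ, l + 1 ≤ l' → (X ^ l : Polynomial (Matrix (Fin p) (Fin p) ℝ)).coeff l' = 0 :=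
    fun l' hl' => by rw [Polynomial.coeff_X_pow, if_neg (by omega)]
  rw [bform_range hWint (f.natDegree + 1) (l + 1) f (X ^ l) hf hx]
  conv_rhs => rw [Finset.sum_comm]
  rw [Finset.sum_eq_single_of_mem l (Finset.self_mem_range_succ l)
      (fun b _ hb => Finset.sum_eq_zero fun k _ => by
        rw [Polynomial.coeff_X_pow, if_neg hb, Matrix.transpose_zero, mul_zero]),
    Finset.sum_mul]
  refine Finset.sum_congr rfl fun k _ => ?_
  rw [Polynomial.coeff_X_pow, if_pos rfl, Matrix.transpose_one, mul_one]

lemma bform_zero_left (n : ℕ) (f g : Polynomial (Matrix (Fin p) (Fin p) ℝ))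
    (hf : ∀ k, n ≤ k → f.coeff k = 0) (hg : ∀ i < n, bform θ W α (X ^ i) g = 0) :
    bform θ W α f g = 0 := by
  rw [bform_decomp_left hWint n f g hf]
  exact Finset.sum_eq_zero fun k hk => by
    rw [hg k (Finset.mem_range.1 hk), mul_zero]

lemma bform_zero_right (n : ℕ) (f g : Polynomial (Matrix (Fin p) (Fin p) ℝ))
    (hg : ∀ l, n ≤ l → g.coeff l = 0) (hf : ∀ i < n, bform θ W α f (X ^ i) = 0) :
    bform θ W α f g = 0 := by
  rw [bform_decomp_right hWint n f g hg]
  exact Finset.sum_eq_zero fun l hl => by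
    rw [hf l (Finset.mem_range.1 hl), zero_mul]

lemma bform_add_right (f g₁ g₂ : Polynomial (Matrix (Fin p) (Fin p) ℝ)) :
    bform θ W α f (g₁ + g₂) = bform θ W α f g₁ + bform θ W α f g₂ := by
  set M := max g₁.natDegree g₂.natDegree + 1 with hM
  have h1 : ∀ l, M ≤ l → g₁.coeff l = 0 := fun l hl =>
    Polynomial.coeff_eq_zero_of_natDegree_lt (by omega)
  have h2 : ∀ l, M ≤ l → g₂.coeff l = 0 := fun l hl =>
    Polynomial.coeff_eq_zero_of_natDegree_lt (by omega)
  have h12 : ∀ l, M ≤ l → (g₁ + g₂).coeff l = 0 := fun l hl => by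
    rw [Polynomial.coeff_add, h1 l hl, h2 l hl, add_zero]
  have hf : ∀ k, f.natDegree + 1 ≤ k → f.coeff k = 0 := fun k hk =>
    Polynomial.coeff_eq_zero_of_natDegree_lt hk
  rw [bform_range hWint (f.natDegree + 1) M f _ hf h12,
    bform_range hWint (f.natDegree + 1) M f _ hf h1,
    bform_range hWint (f.natDegree + 1) M f _ hf h2, ← Finset.sum_add_distrib]
  refine Finset.sum_congr rfl fun k _ => ?_
  rw [← Finset.sum_add_distrib]
  refine Finset.sum_congr rfl fun l _ => ?_
  rw [Polynomial.coeff_add, Matrix.transpose_add, mul_add]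

lemma bform_C_mul_right (A : Matrix (Fin p) (Fin p) ℝ)
    (f g : Polynomial (Matrix (Fin p) (Fin p) ℝ)) :
    bform θ W α f (C A * g) = bform θ W α f g * Aᵀ := by
  have hf : ∀ k, f.natDegree + 1 ≤ k → f.coeff k = 0 := fun k hk =>
    Polynomial.coeff_eq_zero_of_natDegree_lt hk
  have hg : ∀ l, g.natDegree + 1 ≤ l → g.coeff l = 0 := fun l hl =>
    Polynomial.coeff_eq_zero_of_natDegree_lt hl
  have hcg : ∀ l, g.natDegree + 1 ≤ l → (C A * g).coeff l = 0 := fun l hl => by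
    rw [Polynomial.coeff_C_mul, hg l hl, mul_zero]
  rw [bform_range hWint (f.natDegree + 1) (g.natDegree + 1) f _ hf hcg,
    bform_range hWint (f.natDegree + 1) (g.natDegree + 1) f g hf hg, Finset.sum_mul]
  refine Finset.sum_congr rfl fun k _ => ?_
  rw [Finset.sum_mul]
  refine Finset.sum_congr rfl fun l _ => ?_
  rw [Polynomial.coeff_C_mul, Matrix.transpose_mul, ← mul_assoc]

lemma bform_zero_poly_right (f : Polynomial (Matrix (Fin p) (Fin p) ℝ)) :
    bform θ W α f 0 = 0 := by
  rw [bform_eq_bform2 hWint]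
  unfold bform2
  simp

lemma bform_sum_right {ι : Type*} (s : Finset ι) (f : Polynomial (Matrix (Fin p) (Fin p) ℝ))
    (h : ι → Polynomial (Matrix (Fin p) (Fin p) ℝ)) :
    bform θ W α f (∑ j ∈ s, h j) = ∑ j ∈ s, bform θ W α f (h j) := by
  classical
  induction s using Finset.induction_on with
  | empty => simpa using bform_zero_poly_right hWint f
  | insert a s hx ih =>
    rw [Finset.sum_insert hx, Finset.sum_insert hx, bform_add_right hWint, ih]

lemma bform_shift (f g : Polynomial (Matrix (Fin p) (Fin p) ℝ)) :
    bform θ W α f (X * g) = bform θ W α (X ^ θ * f) g := by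
  have hf : ∀ k, f.natDegree + 1 ≤ k → f.coeff k = 0 := fun k hk =>
    Polynomial.coeff_eq_zero_of_natDegree_lt hk
  have hg : ∀ l, g.natDegree + 1 ≤ l → g.coeff l = 0 := fun l hl =>
    Polynomial.coeff_eq_zero_of_natDegree_lt hl
  have hxg : ∀ l, g.natDegree + 1 + 1 ≤ l → (X * g).coeff l = 0 := fun l hl => by
    obtain ⟨l, rfl⟩ : ∃ l', l = l' + 1 := ⟨l - 1, by omega⟩
    rw [Polynomial.coeff_X_mul, hg l (by omega)]
  have hxf : ∀ k, θ + (f.natDegree + 1) ≤ k → (X ^ θ * f).coeff k = 0 := fun k hk => by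
    rw [Polynomial.coeff_X_pow_mul', if_pos (by omega), hf _ (by omega)]
  rw [bform_range hWint (f.natDegree + 1) (g.natDegree + 1 + 1) f (X * g) hf hxg,
    bform_range hWint (θ + (f.natDegree + 1)) (g.natDegree + 1) (X ^ θ * f) g hxf hg]
  conv_rhs => rw [Finset.sum_range_add]
  have hz : ∑ k ∈ Finset.range θ, ∑ l ∈ Finset.range (g.natDegree + 1),
      (X ^ θ * f).coeff k * mom W (α + k + l * θ) * (g.coeff l)ᵀ = 0 := by
    refine Finset.sum_eq_zero fun k hk => Finset.sum_eq_zero fun l _ => ?_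
    rw [Finset.mem_range] at hk
    rw [Polynomial.coeff_X_pow_mul', if_neg (by omega), zero_mul, zero_mul]
  rw [hz, zero_add]
  refine Finset.sum_congr rfl fun k _ => ?_
  rw [Finset.sum_range_succ']
  have hz0 : (X * g).coeff 0 = 0 := by
    rw [Polynomial.mul_coeff_zero, Polynomial.coeff_X_zero, zero_mul]
  rw [hz0, Matrix.transpose_zero, mul_zero, add_zero]
  refine Finset.sum_congr rfl fun l _ => ?_
  rw [Polynomial.coeff_X_mul]
  have hco : (X ^ θ * f).coeff (θ + k) = f.coeff k := by
    rw [add_comm θ k]; exact Polynomial.coeff_X_pow_mul f θ k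
  rw [hco]
  congr 2
  ring


omit hWint in
lemma expand_in_Q (Q : ℕ → Polynomial (Matrix (Fin p) (Fin p) ℝ))
    (hQ : ∀ m, MonicDeg (Q m) m) :
    ∀ n (f : Polynomial (Matrix (Fin p) (Fin p) ℝ)), (∀ k, n < k → f.coeff k = 0) →
      ∃ c : ℕ → Matrix (Fin p) (Fin p) ℝ, f = ∑ j ∈ Finset.range (n + 1), C (c j) * Q j := by
  intro n
  induction n with
  | zero =>
    intro f hf
    refine ⟨fun _ => f.coeff 0, ?_⟩
    rw [Finset.sum_range_one]
    ext k
    cases k with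
    | zero => rw [Polynomial.coeff_C_mul, (hQ 0).1, mul_one]
    | succ k =>
      rw [hf (k + 1) (by omega), Polynomial.coeff_C_mul, (hQ 0).2 (k + 1) (by omega), mul_zero]
  | succ n ih =>
    intro f hf
    obtain ⟨c, hc⟩ := ih (f - C (f.coeff (n + 1)) * Q (n + 1)) (fun k hk => by
      rw [Polynomial.coeff_sub, Polynomial.coeff_C_mul]
      rcases eq_or_lt_of_le (Nat.succ_le_of_lt hk) with h | h
      · rw [← h, (hQ (n + 1)).1, mul_one, sub_self]
      · rw [hf k (by omega), (hQ (n + 1)).2 k (by omega), mul_zero, sub_zero])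
    refine ⟨fun j => if j = n + 1 then f.coeff (n + 1) else c j, ?_⟩
    rw [Finset.sum_range_succ]
    simp only []
    rw [if_true]
    have he : ∑ j ∈ Finset.range (n + 1),
        C (if j = n + 1 then f.coeff (n + 1) else c j) * Q j
        = ∑ j ∈ Finset.range (n + 1), C (c j) * Q j := by
      refine Finset.sum_congr rfl fun j hj => ?_
      rw [if_neg (by rw [Finset.mem_range] at hj; omega)]
    rw [he, ← hc]
    abel

end Aux

/-- recurrence relation
`x·Q_n^{(α)} = Q_{n+1}^{(α)} + Σ_{j=max(n-θ,0)}^{n} ℓ_{n,j}^{(α)}·Q_j^{(α)}`,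
where `(ℓ_{n,j}^{(α)})ᵀ = (H_j^{(α)})⁻¹·⟨P_j^{(α)}, x·Q_n^{(α)}⟩_θ^α`. -/
theorem statement6
    (p θ : ℕ) (hp : 1 ≤ p) (hθ : 1 ≤ θ)
    (W : ℝ → Matrix (Fin p) (Fin p) ℝ)
    (hWmeas : ∀ i j : Fin p, Measurable fun x : ℝ => W x i j)
    (hWint : ∀ (k : ℕ) (i j : Fin p), Integrable fun x : ℝ => x ^ k * W x i j)
    (hM : ∀ (n α : ℕ), 1 ≤ n → IsUnit (momMat θ W n α))
    (P Q : ℕ → ℕ → Polynomial (Matrix (Fin p) (Fin p) ℝ))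
    (hPmonic : ∀ n α : ℕ, MonicDeg (P n α) n)
    (hPorth : ∀ n α : ℕ, ∀ i < n, bform θ W α (P n α) (X ^ i) = 0)
    (hQmonic : ∀ n α : ℕ, MonicDeg (Q n α) n)
    (hQorth : ∀ n α : ℕ, ∀ i < n, bform θ W α (X ^ i) (Q n α) = 0)
    (H : ℕ → ℕ → Matrix (Fin p) (Fin p) ℝ)
    (hHdef : ∀ n α : ℕ, H n α = bform θ W α (P n α) (X ^ n))
    (hHunit : ∀ n α : ℕ, IsUnit (H n α)) :
    ∀ n α : ℕ,
      (X : Polynomial (Matrix (Fin p) (Fin p) ℝ)) * Q n α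
        = Q (n + 1) α
          + ∑ j ∈ Finset.Icc (n - θ) n,
              C ((Ring.inverse (H j α) * bform θ W α (P j α) (X * Q n α))ᵀ) * Q j α := by
  intro n α
  have hQM : ∀ m, MonicDeg (Q m α) m := fun m => hQmonic m α
  have hPM : ∀ m, MonicDeg (P m α) m := fun m => hPmonic m α
  -- expand X * Q n - Q (n+1) in the Q basis
  obtain ⟨c, hc⟩ := expand_in_Q (fun m => Q m α) hQM n (X * Q n α - Q (n + 1) α) (by
    intro k hk
    obtain ⟨k, rfl⟩ : ∃ k', k = k' + 1 := ⟨k - 1, by omega⟩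
    rw [Polynomial.coeff_sub, Polynomial.coeff_X_mul]
    rcases eq_or_lt_of_le (Nat.lt_succ_iff.1 hk) with h | h
    · subst h
      rw [(hQM n).1, (hQM (n + 1)).1, sub_self]
    · rw [(hQM n).2 k (by omega), (hQM (n + 1)).2 (k + 1) (by omega), sub_zero])
  have hXQ : X * Q n α = Q (n + 1) α + ∑ j ∈ Finset.range (n + 1), C (c j) * Q j α := by
    rw [← hc]; abel
  have hlt : ∀ j m : ℕ, j < m → bform θ W α (P m α) (Q j α) = 0 := fun j m hjm =>
    bform_zero_right hWint m _ _ (fun l hl => (hQM j).2 l (by omega)) (hPorth m α)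
  have hgt : ∀ j m : ℕ, m < j → bform θ W α (P m α) (Q j α) = 0 := fun j m hmj =>
    bform_zero_left hWint j _ _ (fun k hk => (hPM m).2 k (by omega))
      (fun i hi => hQorth j α i hi)
  have hPQ : ∀ m, bform θ W α (P m α) (Q m α) = H m α := by
    intro m
    have hq : Q m α = X ^ m + (Q m α - X ^ m) := by abel
    rw [hq, bform_add_right hWint, ← hHdef m α,
      bform_zero_right hWint m _ _ (fun l hl => by
        rw [Polynomial.coeff_sub, Polynomial.coeff_X_pow]
        rcases eq_or_lt_of_le hl with h | h
        · rw [← h, (hQM m).1, if_pos rfl, sub_self]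
        · rw [(hQM m).2 l h, if_neg (by omega), sub_zero]) (hPorth m α), add_zero]
  have hmain : ∀ m, m ≤ n → bform θ W α (P m α) (X * Q n α) = H m α * (c m)ᵀ := by
    intro m hm
    rw [hXQ, bform_add_right hWint,
      bform_zero_left hWint (n + 1) _ _ (fun k hk => (hPM m).2 k (by omega))
        (fun i hi => hQorth (n + 1) α i hi), zero_add, bform_sum_right hWint,
      Finset.sum_eq_single_of_mem m (Finset.mem_range.2 (by omega)) (fun b _ hb => by
        rw [bform_C_mul_right hWint]
        rcases lt_or_gt_of_ne hb with h | h
        · rw [hlt b m h, zero_mul]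
        · rw [hgt b m h, zero_mul]),
      bform_C_mul_right hWint, hPQ m]
  have hcl : ∀ m, m ≤ n →
      c m = (Ring.inverse (H m α) * bform θ W α (P m α) (X * Q n α))ᵀ := by
    intro m hm
    rw [hmain m hm, Ring.inverse_mul_cancel_left _ _ (hHunit m α), transpose_transpose]
  have hlz : ∀ j, j < n - θ →
      (Ring.inverse (H j α) * bform θ W α (P j α) (X * Q n α))ᵀ = 0 := by
    intro j hj
    have hb0 : bform θ W α (P j α) (X * Q n α) = 0 := by
      rw [bform_shift hWint]
      refine bform_zero_left hWint n _ _ (fun k hk => ?_) (fun i hi => hQorth n α i hi)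
      rw [Polynomial.coeff_X_pow_mul']
      split_ifs with h
      · exact (hPM j).2 _ (by omega)
      · rfl
    rw [hb0, mul_zero, Matrix.transpose_zero]
  conv_lhs => rw [hXQ]
  congr 1
  have h1 : ∑ j ∈ Finset.range (n + 1), C (c j) * Q j α
      = ∑ j ∈ Finset.range (n + 1),
          C ((Ring.inverse (H j α) * bform θ W α (P j α) (X * Q n α))ᵀ) * Q j α :=
    Finset.sum_congr rfl fun j hj => by
      rw [hcl j (Nat.lt_succ_iff.1 (Finset.mem_range.1 hj))]
  rw [h1]
  refine (Finset.sum_subset (fun j hj => ?_) (fun j hj hj' => ?_)).symm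
  · rw [Finset.mem_Icc] at hj
    exact Finset.mem_range.2 (by omega)
  · rw [Finset.mem_range] at hj
    rw [Finset.mem_Icc] at hj'
    rw [hlz j (by omega), map_zero, zero_mul]
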